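/- For n ≥ 2, the distinguishing number of the friendship graph F_n equals ⌈(1 + √(8n+1))/2⌉. -/

import Mathlib

open SimpleGraph

/-- A vertex labeling with `d` labels is distinguishing if the only automorphism
preserving it is the identity. -/
def IsDistinguishing {V : Type*} (G : SimpleGraph V) {d : ℕ} (c : V → Fin d) : Prop :=
  ∀ φ : G ≃g G, (∀ v, c (φ v) = c v) → ∀ v, φ v = v

/-- The distinguishing number of a graph. -/
noncomputable def distinguishingNumber {V : Type*} (G : SimpleGraph V) : ℕ :=
  sInf {d : ℕ | ∃ c : V → Fin d, IsDistinguishing G c}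

/-- An edge labeling with `d` labels is distinguishing if the only automorphism
preserving it is the identity. -/
def IsDistinguishingEdge {V : Type*} (G : SimpleGraph V) {d : ℕ} (c : G.edgeSet → Fin d) : Prop :=
  ∀ φ : G ≃g G, (∀ e, c (φ.mapEdgeSet e) = c e) → ∀ v, φ v = v

/-- The distinguishing index of a graph. -/
noncomputable def distinguishingIndex {V : Type*} (G : SimpleGraph V) : ℕ :=
  sInf {d : ℕ | ∃ c : G.edgeSet → Fin d, IsDistinguishingEdge G c}

/-- The friendship graph `F n`: `n` triangles glued at a common central vertex `none`. -/
def friendshipGraph (n : ℕ) : SimpleGraph (Option (Fin n × Fin 2)) :=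
  SimpleGraph.fromRel (fun u v =>
    u = none ∨ ∃ i a b, u = some (i, a) ∧ v = some (i, b))

/-- The book graph `B n = K_{1,n} □ P₂`. -/
def bookGraph (n : ℕ) : SimpleGraph ((Fin 1 ⊕ Fin n) × Fin 2) :=
  (completeBipartiteGraph (Fin 1) (Fin n)) □ (SimpleGraph.pathGraph 2)

/-- The corona product `G ∘ H`: one copy of `G`, a copy of `H` for each vertex `v` of `G`,
with `v` joined to every vertex of its copy of `H`. -/
def coronaProduct {V W : Type*} (G : SimpleGraph V) (H : SimpleGraph W) :
    SimpleGraph (V ⊕ V × W) :=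
  SimpleGraph.fromRel (fun a b =>
    (∃ u v, a = Sum.inl u ∧ b = Sum.inl v ∧ G.Adj u v) ∨
    (∃ v w w', a = Sum.inr (v, w) ∧ b = Sum.inr (v, w') ∧ H.Adj w w') ∨
    (∃ v w, a = Sum.inl v ∧ b = Sum.inr (v, w)))

namespace FriendshipProofAux

lemma fg_adj_iff {n : ℕ} (u v : Option (Fin n × Fin 2)) :
    (friendshipGraph n).Adj u v ↔
      (u = none ∧ v ≠ none) ∨ (u ≠ none ∧ v = none) ∨
      (∃ i a b, a ≠ b ∧ u = some (i, a) ∧ v = some (i, b)) := by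
  cases u with
  | none => cases v <;> simp [friendshipGraph]
  | some p =>
    cases v with
    | none => simp [friendshipGraph]
    | some q =>
      obtain ⟨i, a⟩ := p; obtain ⟨j, b⟩ := q
      simp only [friendshipGraph, fromRel_adj]
      constructor
      · rintro ⟨hne, h⟩
        right; right
        rcases h with (h | ⟨k, c, d, h1, h2⟩) | (h | ⟨k, c, d, h1, h2⟩)
        · exact absurd h (by simp)
        · simp only [Option.some.injEq, Prod.mk.injEq] at h1 h2
          obtain ⟨rfl, rfl⟩ := h1; obtain ⟨rfl, rfl⟩ := h2
          exact ⟨_, _, _, by simpa using hne, rfl, rfl⟩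
        · exact absurd h (by simp)
        · simp only [Option.some.injEq, Prod.mk.injEq] at h1 h2
          obtain ⟨rfl, rfl⟩ := h1; obtain ⟨rfl, rfl⟩ := h2
          exact ⟨_, _, _, by simpa using hne, rfl, rfl⟩
      · rintro (⟨h, -⟩ | ⟨-, h⟩ | ⟨k, c, d, hcd, h1, h2⟩)
        · exact absurd h (by simp)
        · exact absurd h (by simp)
        · simp only [Option.some.injEq, Prod.mk.injEq] at h1 h2
          obtain ⟨rfl, rfl⟩ := h1; obtain ⟨rfl, rfl⟩ := h2
          exact ⟨by simpa using hcd, Or.inl (Or.inr ⟨_, _, _, rfl, rfl⟩)⟩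

def triEquiv {n : ℕ} (σ : Equiv.Perm (Fin n)) (τ : Fin n → Equiv.Perm (Fin 2)) :
    Option (Fin n × Fin 2) ≃ Option (Fin n × Fin 2) :=
  Equiv.optionCongr
    { toFun := fun p => (σ p.1, τ p.1 p.2)
      invFun := fun p => (σ.symm p.1, (τ (σ.symm p.1)).symm p.2)
      left_inv := fun p => by simp
      right_inv := fun p => by simp }

@[simp] lemma triEquiv_none {n : ℕ} (σ : Equiv.Perm (Fin n)) (τ : Fin n → Equiv.Perm (Fin 2)) :
    triEquiv σ τ none = none := rfl

@[simp] lemma triEquiv_some {n : ℕ} (σ : Equiv.Perm (Fin n)) (τ : Fin n → Equiv.Perm (Fin 2))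
    (i : Fin n) (a : Fin 2) : triEquiv σ τ (some (i, a)) = some (σ i, τ i a) := rfl

def triIso {n : ℕ} (σ : Equiv.Perm (Fin n)) (τ : Fin n → Equiv.Perm (Fin 2)) :
    friendshipGraph n ≃g friendshipGraph n where
  toEquiv := triEquiv σ τ
  map_rel_iff' := by
    intro u v
    cases u with
    | none =>
      cases v with
      | none => simp [fg_adj_iff]
      | some q => obtain ⟨j, b⟩ := q; simp [fg_adj_iff]
    | some p =>
      obtain ⟨i, a⟩ := p
      cases v with
      | none => simp [fg_adj_iff]
      | some q =>
        obtain ⟨j, b⟩ := q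
        simp only [Equiv.coe_fn_mk, triEquiv_some, fg_adj_iff, Option.some.injEq,
          Prod.mk.injEq, reduceCtorEq, ne_eq, false_and, and_false, false_or, not_false_eq_true,
          and_true, true_and]
        constructor
        · rintro ⟨k, c, d, hcd, ⟨h1, h2⟩, h3, h4⟩
          have hij : i = j := σ.injective (h1.trans h3.symm)
          subst hij
          refine ⟨i, a, b, ?_, ⟨rfl, rfl⟩, rfl, rfl⟩
          rintro rfl
          exact hcd (by rw [← h2, ← h4])
        · rintro ⟨k, c, d, hcd, ⟨rfl, rfl⟩, rfl, rfl⟩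
          refine ⟨_, _, _, ?_, ⟨rfl, rfl⟩, rfl, rfl⟩
          exact fun h => hcd ((τ _).injective h)

@[simp] lemma triIso_apply {n : ℕ} (σ : Equiv.Perm (Fin n)) (τ : Fin n → Equiv.Perm (Fin 2))
    (v : Option (Fin n × Fin 2)) : triIso σ τ v = triEquiv σ τ v := rfl

lemma ceil_iff_key (n : ℕ) (hn : 2 ≤ n) (d : ℕ) :
    ⌈(1 + Real.sqrt (8 * n + 1)) / 2⌉₊ ≤ d ↔ 2 * n ≤ d * (d - 1) := by
  have h1 : (1:ℝ) ≤ Real.sqrt (8 * n + 1) := by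
    have h0 : (0:ℝ) ≤ (n:ℝ) := Nat.cast_nonneg n
    nlinarith [Real.sq_sqrt (show (0:ℝ) ≤ 8*(n:ℝ)+1 by linarith),
      Real.sqrt_nonneg (8*(n:ℝ)+1)]
  rcases Nat.eq_zero_or_pos d with rfl | hd
  · simp only [Nat.le_zero, Nat.zero_mul]
    constructor
    · intro h
      exfalso
      rw [Nat.ceil_eq_zero] at h
      nlinarith
    · omega
  · obtain ⟨e, rfl⟩ : ∃ e, d = e + 1 := ⟨d - 1, by omega⟩
    rw [Nat.ceil_le, div_le_iff₀ (by norm_num),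
      show ((e + 1 : ℕ) : ℝ) * 2 = 1 + ((2 * e + 1 : ℕ) : ℝ) by push_cast; ring,
      add_le_add_iff_left, Real.sqrt_le_left (by positivity),
      show ((8:ℝ) * n + 1) = ((8 * n + 1 : ℕ) : ℝ) by push_cast; ring,
      ← Nat.cast_pow, Nat.cast_le, show e + 1 - 1 = e from rfl]
    constructor <;> intro h <;> nlinarith [h]

lemma phi_none {n : ℕ} (hn : 2 ≤ n) (φ : friendshipGraph n ≃g friendshipGraph n) :
    φ none = none := by
  by_contra h
  obtain ⟨⟨j, b⟩, hj⟩ : ∃ p, φ none = some p := by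
    cases hφ : φ none with
    | none => exact absurd hφ h
    | some p => exact ⟨p, rfl⟩
  have hcard : 1 < Fintype.card (Fin n) := by rw [Fintype.card_fin]; omega
  obtain ⟨k, hk⟩ := Fintype.exists_ne_of_one_lt_card hcard j
  set u := φ.symm (some (k, 0)) with hu
  have hphiu : φ u = some (k, 0) := φ.apply_symm_apply _
  have hune : u ≠ none := by
    intro h0
    rw [h0, hj] at hphiu
    simp only [Option.some.injEq, Prod.mk.injEq] at hphiu
    exact hk hphiu.1.symm
  have hadj : (friendshipGraph n).Adj none u := (fg_adj_iff _ _).mpr (Or.inl ⟨rfl, hune⟩)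
  have hadj2 : (friendshipGraph n).Adj (φ none) (φ u) := φ.map_rel_iff.mpr hadj
  rw [hj, hphiu, fg_adj_iff] at hadj2
  rcases hadj2 with ⟨h1, -⟩ | ⟨-, h1⟩ | ⟨i, a, b', -, h1, h2⟩
  · exact absurd h1 (by simp)
  · exact absurd h1 (by simp)
  · simp only [Option.some.injEq, Prod.mk.injEq] at h1 h2
    exact hk (h2.1 ▸ h1.1 ▸ rfl)

lemma phi_some {n : ℕ} (hn : 2 ≤ n) (φ : friendshipGraph n ≃g friendshipGraph n)
    (i : Fin n) (a : Fin 2) : ∃ j b, φ (some (i, a)) = some (j, b) := by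
  cases hφ : φ (some (i, a)) with
  | none =>
    exfalso
    have := phi_none hn φ
    have := φ.injective (hφ.trans this.symm)
    simp at this
  | some p =>
    obtain ⟨p1, p2⟩ := p
    exact ⟨p1, p2, rfl⟩

lemma exists_distinguishing {n : ℕ} (hn : 2 ≤ n) (d : ℕ) (hd : 2 * n ≤ d * (d - 1)) :
    ∃ c : Option (Fin n × Fin 2) → Fin d, IsDistinguishing (friendshipGraph n) c := by
  have hcard : Fintype.card (Fin n) ≤ Fintype.card {p : Sym2 (Fin d) // ¬ p.IsDiag} := by
    rw [Sym2.card_subtype_not_diag, Fintype.card_fin, Fintype.card_fin, Nat.choose_two_right]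
    have h2 : 2 * n ≤ d * (d - 1) := hd
    set m := d * (d - 1)
    omega
  obtain ⟨f⟩ := Function.Embedding.nonempty_of_card_le hcard
  set g : Fin n → Fin d × Fin d := fun i => Quot.out ((f i : {p : Sym2 (Fin d) // ¬ p.IsDiag}) : Sym2 (Fin d)) with hgdef
  have hg : ∀ i, Sym2.mk (g i).1 (g i).2 = (f i : Sym2 (Fin d)) := fun i => Quot.out_eq _
  have hne : ∀ i, (g i).1 ≠ (g i).2 := by
    intro i h
    exact (f i).2 (by rw [← hg i]; exact Sym2.mk_isDiag_iff.mpr h)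
  have hinj : ∀ i j, Sym2.mk (g i).1 (g i).2 = Sym2.mk (g j).1 (g j).2 → i = j := by
    intro i j h
    exact f.injective (Subtype.ext (by rw [← hg i, ← hg j, h]))
  have hn0 : 0 < n := by omega
  refine ⟨fun v => Option.elim v (g ⟨0, hn0⟩).1 (fun p => if p.2 = 0 then (g p.1).1 else (g p.1).2), ?_⟩
  intro φ hφ
  have h0 : φ none = none := phi_none hn φ
  have key : ∀ i : Fin n, φ (some (i, 0)) = some (i, 0) ∧ φ (some (i, 1)) = some (i, 1) := by
    intro i
    obtain ⟨j, b, hb⟩ := phi_some hn φ i 0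
    obtain ⟨j', b', hb'⟩ := phi_some hn φ i 1
    have hadj : (friendshipGraph n).Adj (some (i, 0)) (some (i, 1)) :=
      (fg_adj_iff _ _).mpr (Or.inr (Or.inr ⟨i, 0, 1, by decide, rfl, rfl⟩))
    have hadj2 : (friendshipGraph n).Adj (φ (some (i, 0))) (φ (some (i, 1))) :=
      φ.map_rel_iff.mpr hadj
    rw [hb, hb', fg_adj_iff] at hadj2
    rcases hadj2 with ⟨h1, -⟩ | ⟨-, h1⟩ | ⟨k, cc, dd, hcd, h1, h2⟩
    · exact absurd h1 (by simp)
    · exact absurd h1 (by simp)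
    · simp only [Option.some.injEq, Prod.mk.injEq] at h1 h2
      have hjj : j' = j := h2.1.trans h1.1.symm
      have hbb : b ≠ b' := by
        rw [h1.2, h2.2]
        exact hcd
      rw [hjj] at hb'
      clear h1 h2 hjj hcd hadj
      have E0 := hφ (some (i, 0))
      have E1 := hφ (some (i, 1))
      rw [hb] at E0
      rw [hb'] at E1
      simp only [Option.elim] at E0 E1
      have f2 : ∀ x : Fin 2, x = 0 ∨ x = 1 := by decide
      rcases f2 b with rfl | rfl <;> rcases f2 b' with rfl | rfl
      · exact absurd rfl hbb
      · -- b = 0, b' = 1 : identity on this triangle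
        norm_num at E0 E1
        have hgij : g j = g i := Prod.ext E0 E1
        have hij : j = i := hinj _ _ (by rw [hgij])
        subst hij
        exact ⟨hb, hb'⟩
      · -- b = 1, b' = 0 : swapped, contradiction
        norm_num at E0 E1
        have hs : Sym2.mk (g j).1 (g j).2 = Sym2.mk (g i).1 (g i).2 := by
          rw [E0, E1, Sym2.eq_swap]
        have hij : j = i := hinj _ _ hs
        subst hij
        exact absurd E0.symm (hne _)
      · exact absurd rfl hbb
  rintro (_ | ⟨i, a⟩)
  · exact h0
  · fin_cases a
    · exact (key i).1
    · exact (key i).2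

lemma lower_bound {n : ℕ} (hn : 2 ≤ n) (d : ℕ) (c : Option (Fin n × Fin 2) → Fin d)
    (hc : IsDistinguishing (friendshipGraph n) c) : 2 * n ≤ d * (d - 1) := by
  have hne : ∀ i : Fin n, c (some (i, 0)) ≠ c (some (i, 1)) := by
    intro i h
    set φ := triIso (n := n) 1 (fun k => if k = i then Equiv.swap 0 1 else 1) with hφdef
    have hpres : ∀ v, c (φ v) = c v := by
      rintro (_ | ⟨k, a⟩)
      · rfl
      · rw [triIso_apply, triEquiv_some]
        have f2 : ∀ x : Fin 2, x = 0 ∨ x = 1 := by decide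
        by_cases hk : k = i
        · subst hk
          rcases f2 a with rfl | rfl
          · simpa using h.symm
          · simpa using h
        · simp [hk]
    have := hc φ hpres (some (i, 0))
    rw [triIso_apply, triEquiv_some] at this
    simp at this
  have hdist : ∀ i j : Fin n,
      s(c (some (i, 0)), c (some (i, 1))) = s(c (some (j, 0)), c (some (j, 1))) → i = j := by
    intro i j h
    by_contra hij
    rw [Sym2.eq_iff] at h
    rcases h with ⟨h1, h2⟩ | ⟨h1, h2⟩
    · -- same orientation: swap triangles i and j
      set φ := triIso (Equiv.swap i j) (fun _ => 1) with hφdef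
      have hpres : ∀ v, c (φ v) = c v := by
        rintro (_ | ⟨k, a⟩)
        · rfl
        · rw [triIso_apply, triEquiv_some]
          simp only [Equiv.Perm.coe_one, id_eq]
          have f2 : ∀ x : Fin 2, x = 0 ∨ x = 1 := by decide
          rcases eq_or_ne k i with rfl | hki
          · rw [Equiv.swap_apply_left]
            rcases f2 a with rfl | rfl
            · exact h1.symm
            · exact h2.symm
          · rcases eq_or_ne k j with rfl | hkj
            · rw [Equiv.swap_apply_right]
              rcases f2 a with rfl | rfl
              · exact h1
              · exact h2
            · rw [Equiv.swap_apply_of_ne_of_ne hki hkj]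
      have := hc φ hpres (some (i, 0))
      rw [triIso_apply, triEquiv_some] at this
      simp only [Equiv.swap_apply_left, Option.some.injEq, Prod.mk.injEq] at this
      exact hij this.1.symm
    · -- flipped orientation
      set φ := triIso (Equiv.swap i j)
        (fun k => if k = i ∨ k = j then Equiv.swap 0 1 else 1) with hφdef
      have hpres : ∀ v, c (φ v) = c v := by
        rintro (_ | ⟨k, a⟩)
        · rfl
        · rw [triIso_apply, triEquiv_some]
          have f2 : ∀ x : Fin 2, x = 0 ∨ x = 1 := by decide
          rcases eq_or_ne k i with rfl | hki
          · rw [Equiv.swap_apply_left, if_pos (Or.inl rfl)]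
            rcases f2 a with rfl | rfl
            · simpa using h1.symm
            · simpa using h2.symm
          · rcases eq_or_ne k j with rfl | hkj
            · rw [Equiv.swap_apply_right, if_pos (Or.inr rfl)]
              rcases f2 a with rfl | rfl
              · simpa using h2
              · simpa using h1
            · rw [Equiv.swap_apply_of_ne_of_ne hki hkj, if_neg (by simp [hki, hkj])]
              simp
      have := hc φ hpres (some (i, 0))
      rw [triIso_apply, triEquiv_some] at this
      simp only [Equiv.swap_apply_left, Option.some.injEq, Prod.mk.injEq] at this
      exact hij this.1.symm
  have hcard : n ≤ Nat.choose d 2 := by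
    have hF : Function.Injective
        (fun i : Fin n => (⟨s(c (some (i, 0)), c (some (i, 1))),
          by rw [Sym2.mk_isDiag_iff]; exact hne i⟩ : {p : Sym2 (Fin d) // ¬ p.IsDiag})) := by
      intro i j h
      exact hdist i j (congrArg Subtype.val h)
    have hle := Fintype.card_le_of_injective _ hF
    rwa [Fintype.card_fin, Sym2.card_subtype_not_diag, Fintype.card_fin] at hle
  rw [Nat.choose_two_right] at hcard
  set m := d * (d - 1)
  omega

end FriendshipProofAux

open FriendshipProofAux in
theorem friendship_distinguishingNumber (n : ℕ) (hn : 2 ≤ n) :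
    distinguishingNumber (friendshipGraph n) = ⌈(1 + Real.sqrt (8 * n + 1)) / 2⌉₊ := by
  set d0 := ⌈(1 + Real.sqrt (8 * n + 1)) / 2⌉₊ with hd0
  have hmem : d0 ∈ {d : ℕ | ∃ c : Option (Fin n × Fin 2) → Fin d,
      IsDistinguishing (friendshipGraph n) c} :=
    exists_distinguishing hn d0 ((ceil_iff_key n hn d0).mp le_rfl)
  refine le_antisymm (Nat.sInf_le hmem) ?_
  have hmem2 := Nat.sInf_mem (⟨d0, hmem⟩ : Set.Nonempty _)
  obtain ⟨c, hcd⟩ := hmem2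
  exact (ceil_iff_key n hn _).mpr (lower_bound hn _ c hcd)
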